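/- For every n ≥ 0, the polynomial ∑_{k=0}^n C(n,k) k^{n-k} x^k, whose coefficients are the idempotent numbers, is real-rooted. -/

import Mathlib

open Polynomial Finset

noncomputable section

def mkp (N : ℕ) (f : ℕ → ℝ) : ℝ[X] := ∑ k ∈ range (N+1), C (f k) * X^k

lemma coeff_mkp (N : ℕ) (f : ℕ → ℝ) (j : ℕ) :
    (mkp N f).coeff j = if j ≤ N then f j else 0 := by
  unfold mkp
  rw [finset_sum_coeff]
  simp only [coeff_C_mul, coeff_X_pow, mul_ite, mul_one, mul_zero]
  by_cases h : j ≤ N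
  · rw [if_pos h, Finset.sum_eq_single j]
    · simp
    · intro b _ hbj; simp [Ne.symm hbj]
    · intro hj; exact absurd (Finset.mem_range.mpr (by omega)) hj
  · rw [if_neg h]
    apply Finset.sum_eq_zero
    intro k hk
    rw [if_neg]
    intro hjk
    exact h (hjk ▸ Nat.lt_succ_iff.mp (Finset.mem_range.mp hk))

/-- the shifted idempotent polynomial family -/
def Pp (n : ℕ) (s : ℝ) : ℝ[X] := mkp n (fun k => (n.choose k : ℝ) * ((k : ℝ) + s) ^ (n - k))

lemma eval_mkp (N : ℕ) (f : ℕ → ℝ) (x : ℝ) :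
    (mkp N f).eval x = ∑ k ∈ range (N+1), f k * x^k := by
  unfold mkp
  rw [eval_finset_sum]
  simp

lemma eval_Pp (n : ℕ) (s x : ℝ) :
    (Pp n s).eval x = ∑ k ∈ range (n+1), (n.choose k : ℝ) * ((k:ℝ) + s)^(n-k) * x^k :=
  eval_mkp _ _ _

lemma eval_Pp_zero (n : ℕ) (s : ℝ) : (Pp n s).eval 0 = s ^ n := by
  rw [eval_Pp, Finset.sum_eq_single 0]
  · simp
  · intro k _ hk; simp [zero_pow hk]
  · simp

lemma natDegree_Pp (n : ℕ) (s : ℝ) : (Pp n s).natDegree = n := by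
  have h1 : (Pp n s).coeff n = 1 := by
    rw [Pp, coeff_mkp, if_pos le_rfl]; simp
  apply le_antisymm
  · apply natDegree_le_iff_coeff_eq_zero.mpr
    intro m hm
    rw [Pp, coeff_mkp, if_neg (by omega)]
  · exact le_natDegree_of_ne_zero (by rw [h1]; norm_num)

lemma monic_Pp (n : ℕ) (s : ℝ) : (Pp n s).Monic := by
  unfold Monic leadingCoeff
  rw [natDegree_Pp, Pp, coeff_mkp, if_pos le_rfl]; simp

lemma choose_succ_cast (n j : ℕ) :
    ((j:ℝ)+1) * ((n+1).choose (j+1) : ℝ) = ((n:ℝ)+1) * (n.choose j : ℝ) := by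
  have := Nat.add_one_mul_choose_eq n j
  have h2 : ((n.succ * n.choose j : ℕ) : ℝ) = (((n+1).choose (j+1) * (j+1) : ℕ) : ℝ) := by
    exact_mod_cast congrArg (Nat.cast : ℕ → ℝ) this
  push_cast at h2
  ring_nf
  ring_nf at h2
  linarith

/-- Id1 -/
lemma derivative_Pp (n : ℕ) (s : ℝ) :
    derivative (Pp (n+1) s) = C ((n:ℝ)+1) * Pp n (s+1) := by
  ext j
  rw [coeff_derivative, coeff_C_mul, Pp, Pp, coeff_mkp, coeff_mkp]
  by_cases hj : j ≤ n
  · rw [if_pos (by omega), if_pos hj]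
    have he : n + 1 - (j+1) = n - j := by omega
    rw [he]
    push_cast
    have : ((j:ℝ) + 1 + s) = (j:ℝ) + (s+1) := by ring
    rw [this]
    have h := choose_succ_cast n j
    push_cast at h
    linear_combination (((j:ℝ)+(s+1))^(n-j)) * h
  · rw [if_neg (by omega), if_neg hj]
    ring

/-- Id2' -/
lemma Pp_rec (n : ℕ) (s : ℝ) :
    Pp (n+1) s = C s * Pp n s + X * Pp n (s+1) + X * derivative (Pp n s) := by
  ext j
  simp only [coeff_add, coeff_C_mul]
  cases j with
  | zero =>
    rw [mul_coeff_zero, mul_coeff_zero, coeff_X_zero, Pp, Pp, coeff_mkp, coeff_mkp,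
      if_pos (Nat.zero_le _), if_pos (Nat.zero_le _)]
    simp [pow_succ]
    ring
  | succ j =>
    rw [coeff_X_mul, coeff_X_mul, coeff_derivative, Pp, Pp, Pp, coeff_mkp, coeff_mkp, coeff_mkp]
    by_cases h1 : j + 1 ≤ n
    · rw [if_pos (show j+1 ≤ n+1 by omega), if_pos h1, if_pos (show j ≤ n by omega)]
      have e1 : n + 1 - (j+1) = (n - (j+1)) + 1 := by omega
      have e2 : n - j = (n - (j+1)) + 1 := by omega
      rw [e1, e2, Nat.choose_succ_succ]
      push_cast
      ring
    · by_cases h2 : j ≤ n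
      · have hjn : j = n := by omega
        subst hjn
        rw [if_pos (show j+1 ≤ j+1 by omega), if_neg h1, if_pos le_rfl]
        simp
      · rw [if_neg (show ¬ (j+1 ≤ n+1) by omega), if_neg h1, if_neg h2]
        ring

lemma choose_sub_cast (n k : ℕ) (hk : k ≤ n) :
    ((n+1-k : ℕ) : ℝ) * ((n+1).choose k : ℝ) = ((n:ℝ)+1) * (n.choose k : ℝ) := by
  have h : (n+1-k) * (n+1).choose k = (n+1) * n.choose k := by
    have e : n+1-k = (n-k)+1 := by omega
    have h1 : (n+1).choose (n+1-k) = (n+1).choose k := Nat.choose_symm (by omega)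
    have h2 : n.choose (n-k) = n.choose k := Nat.choose_symm hk
    have key2 : (n+1).choose ((n-k)+1) * ((n-k)+1) = (n+1) * n.choose (n-k) :=
      (Nat.add_one_mul_choose_eq n (n-k)).symm
    rw [← h2, ← h1, e, mul_comm]
    exact key2
  exact_mod_cast congrArg (Nat.cast : ℕ → ℝ) h

/-- Id3 -/
lemma hasDerivAt_eval_Pp (n : ℕ) (x σ : ℝ) :
    HasDerivAt (fun u => (Pp (n+1) u).eval x) (((n:ℝ)+1) * (Pp n σ).eval x) σ := by
  have key : ∀ u, (Pp (n+1) u).eval x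
      = ∑ k ∈ range (n+2), ((n+1).choose k : ℝ) * ((k:ℝ) + u)^(n+1-k) * x^k := by
    intro u; exact eval_Pp (n+1) u x
  have h : HasDerivAt (fun u => ∑ k ∈ range (n+2), ((n+1).choose k : ℝ) * ((k:ℝ) + u)^(n+1-k) * x^k)
      (∑ k ∈ range (n+2), ((n+1).choose k : ℝ) * (((n+1-k : ℕ):ℝ) * ((k:ℝ) + σ)^(n+1-k-1) * 1) * x^k) σ := by
    apply HasDerivAt.fun_sum
    intro k _
    exact ((((hasDerivAt_id σ).const_add (k:ℝ)).pow (n+1-k)).const_mul _).mul_const _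
  have heq : (∑ k ∈ range (n+2), ((n+1).choose k : ℝ) * (((n+1-k : ℕ):ℝ) * ((k:ℝ) + σ)^(n+1-k-1) * 1) * x^k)
      = ((n:ℝ)+1) * (Pp n σ).eval x := by
    rw [eval_Pp, Finset.mul_sum, Finset.sum_range_succ]
    have hlast : ((n+1).choose (n+1) : ℝ) * (((n+1-(n+1) : ℕ):ℝ) * (((n+1:ℕ):ℝ) + σ)^(n+1-(n+1)-1) * 1) * x^(n+1) = 0 := by
      simp
    rw [hlast, add_zero]
    apply Finset.sum_congr rfl
    intro k hk
    have hk' : k ≤ n := by simpa [Nat.lt_succ_iff] using hk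
    have e : n+1-k-1 = n-k := by omega
    rw [e, mul_one]
    rw [show ((n+1).choose k : ℝ) * (((n+1-k : ℕ):ℝ) * ((k:ℝ) + σ)^(n-k))
        = (((n+1-k : ℕ):ℝ) * ((n+1).choose k : ℝ)) * ((k:ℝ) + σ)^(n-k) by ring,
      choose_sub_cast n k hk']
    ring
  rw [show (((n:ℝ)+1) * (Pp n σ).eval x) = (∑ k ∈ range (n+2), ((n+1).choose k : ℝ) * (((n+1-k : ℕ):ℝ) * ((k:ℝ) + σ)^(n+1-k-1) * 1) * x^k) from heq.symm]
  exact HasDerivAt.congr_of_eventuallyEq h (by filter_upwards with u using (key u))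

lemma factor_of_roots (p : ℝ[X]) (N : ℕ) (hm : p.Monic) (hd : p.natDegree = N)
    (v : ℕ → ℝ) (hanti : ∀ i j, i < j → j < N → v j < v i) (hroot : ∀ i < N, p.eval (v i) = 0) :
    p = ∏ i ∈ range N, (X - C (v i)) := by
  set q : ℝ[X] := ∏ i ∈ range N, (X - C (v i)) with hq
  have hqm : q.Monic := monic_prod_of_monic _ _ (fun i _ => monic_X_sub_C (v i))
  have hqd : q.natDegree = N := by
    rw [hq, natDegree_prod_of_monic _ _ (fun i _ => monic_X_sub_C (v i))]
    simp
  by_contra hne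
  have hsub : p - q ≠ 0 := sub_ne_zero.mpr hne
  have hcoeff : (p - q).coeff N = 0 := by
    rw [coeff_sub]
    have h1 : p.coeff N = 1 := by rw [← hd]; exact hm
    have h2 : q.coeff N = 1 := by rw [← hqd]; exact hqm
    rw [h1, h2, sub_self]
  have hle : (p - q).natDegree ≤ N := by
    refine le_trans (natDegree_sub_le _ _) ?_
    rw [hd, hqd]; omega
  have hlt : (p - q).natDegree < N := by
    rcases lt_or_eq_of_le hle with h | h
    · exact h
    · exfalso
      apply leadingCoeff_ne_zero.mpr hsub
      rw [leadingCoeff, h, hcoeff]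
  have hrootpq : ∀ i < N, (p - q).eval (v i) = 0 := by
    intro i hi
    rw [eval_sub, hroot i hi, hq, eval_prod]
    have : ∏ j ∈ range N, (X - C (v j)).eval (v i) = 0 := by
      apply Finset.prod_eq_zero (Finset.mem_range.mpr hi)
      simp
    rw [this, sub_zero]
  have hinj : Set.InjOn v (range N) := by
    intro i hi j hj hij
    by_contra hne'
    rcases Nat.lt_or_ge i j with h | h
    · exact absurd hij (ne_of_gt (hanti i j h (Finset.mem_range.mp hj)))
    · have : j < i := by omega
      exact absurd hij (ne_of_lt (hanti j i this (Finset.mem_range.mp hi)))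
  have hsubset : (range N).image v ⊆ (p - q).roots.toFinset := by
    intro x hx
    rcases Finset.mem_image.mp hx with ⟨i, hi, rfl⟩
    rw [Multiset.mem_toFinset, mem_roots hsub]
    exact hrootpq i (Finset.mem_range.mp hi)
  have hcard : N ≤ (p - q).roots.toFinset.card := by
    calc N = ((range N).image v).card := by rw [Finset.card_image_of_injOn hinj, card_range]
    _ ≤ _ := Finset.card_le_card hsubset
  have : (p - q).roots.toFinset.card ≤ (p - q).natDegree :=
    le_trans (Multiset.toFinset_card_le _) (card_roots' _)
  omega

/-- sign of a product of (x - v j) over a finset -/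
lemma sign_prod_gen (S : Finset ℕ) (v : ℕ → ℝ) (x : ℝ) (h : ∀ j ∈ S, v j ≠ x) :
    0 < (-1:ℝ)^((S.filter (fun j => x < v j)).card) * ∏ j ∈ S, (x - v j) := by
  classical
  rw [← Finset.prod_filter_mul_prod_filter_not S (fun j => x < v j)]
  have h1 : ∏ j ∈ S.filter (fun j => x < v j), (x - v j)
      = (-1:ℝ)^((S.filter (fun j => x < v j)).card) * ∏ j ∈ S.filter (fun j => x < v j), (v j - x) := by
    rw [← Finset.prod_const, ← Finset.prod_mul_distrib]
    apply Finset.prod_congr rfl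
    intro j _; ring
  rw [h1]
  have h2 : 0 < ∏ j ∈ S.filter (fun j => x < v j), (v j - x) := by
    apply Finset.prod_pos
    intro j hj
    have := (Finset.mem_filter.mp hj).2
    linarith
  have h3 : 0 < ∏ j ∈ S.filter (fun j => ¬ x < v j), (x - v j) := by
    apply Finset.prod_pos
    intro j hj
    have h4 := (Finset.mem_filter.mp hj).2
    have h5 := h j (Finset.mem_filter.mp hj).1
    rcases lt_or_eq_of_le (not_lt.mp h4) with h6 | h6
    · linarith
    · exact absurd h6 (by simpa using h5)
  have h6 : ((-1:ℝ)^((S.filter (fun j => x < v j)).card))^2 = 1 := by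
    rw [← pow_mul, mul_comm, pow_mul]; norm_num
  have h7 : (-1:ℝ)^((S.filter (fun j => x < v j)).card) *
      (((-1:ℝ)^((S.filter (fun j => x < v j)).card) * ∏ j ∈ S.filter (fun j => x < v j), (v j - x)) *
        ∏ j ∈ S.filter (fun j => ¬ x < v j), (x - v j))
      = ((-1:ℝ)^((S.filter (fun j => x < v j)).card))^2 *
        ((∏ j ∈ S.filter (fun j => x < v j), (v j - x)) * ∏ j ∈ S.filter (fun j => ¬ x < v j), (x - v j)) := by
    ring
  rw [h7, h6, one_mul]
  exact mul_pos h2 h3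

/-- sign of eval of a fully factored polynomial when we know the position of x -/
lemma sign_eval_factored (N : ℕ) (v : ℕ → ℝ) (x : ℝ) (m : ℕ) (hm : m ≤ N)
    (hup : ∀ j, j < m → x < v j) (hdn : ∀ j, m ≤ j → j < N → v j < x) :
    0 < (-1:ℝ)^m * (∏ i ∈ range N, (X - C (v i))).eval x := by
  have hfe : (range N).filter (fun j => x < v j) = range m := by
    ext j
    simp only [Finset.mem_filter, Finset.mem_range]
    constructor
    · rintro ⟨hjN, hxv⟩
      by_contra hjm
      exact absurd hxv (not_lt.mpr (le_of_lt (hdn j (by omega) hjN)))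
    · intro hjm
      exact ⟨by omega, hup j hjm⟩
  have hne : ∀ j ∈ range N, v j ≠ x := by
    intro j hj
    rcases Nat.lt_or_ge j m with h | h
    · exact ne_of_gt (hup j h)
    · exact ne_of_lt (hdn j h (Finset.mem_range.mp hj))
  have := sign_prod_gen (range N) v x hne
  rw [hfe, card_range] at this
  rw [eval_prod]
  simpa using this

lemma pow_neg_one_parity (a b : ℕ) (c : ℝ) (h1 : 0 < (-1:ℝ)^a * c) (h2 : 0 < (-1:ℝ)^b * c) :
    a % 2 = b % 2 := by
  rcases Nat.even_or_odd a with ha | ha <;> rcases Nat.even_or_odd b with hb | hb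
  · obtain ⟨x, hx⟩ := ha; obtain ⟨y, hy⟩ := hb; omega
  · rw [Even.neg_one_pow ha] at h1; rw [Odd.neg_one_pow hb] at h2; linarith
  · rw [Odd.neg_one_pow ha] at h1; rw [Even.neg_one_pow hb] at h2; linarith
  · obtain ⟨x, hx⟩ := ha; obtain ⟨y, hy⟩ := hb; omega

lemma filter_initial (N : ℕ) (w : ℕ → ℝ) (hanti : ∀ i j, i < j → j < N → w j < w i)
    (x : ℝ) (hne : ∀ j, j < N → w j ≠ x) (m : ℕ)
    (hcard : ((range N).filter (fun j => x < w j)).card = m) :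
    (∀ j, j < m → x < w j) ∧ (∀ j, m ≤ j → j < N → w j < x) := by
  have hmN : m ≤ N := by
    have h1 : ((range N).filter (fun j => x < w j)).card ≤ (range N).card :=
      Finset.card_le_card (Finset.filter_subset _ _)
    rw [hcard, card_range] at h1
    exact h1
  constructor
  · intro j hjm
    by_contra hnx
    have hsub : (range N).filter (fun j => x < w j) ⊆ range j := by
      intro k hk
      rcases Finset.mem_filter.mp hk with ⟨hkN, hxk⟩
      rw [Finset.mem_range]
      by_contra hkj
      push_neg at hkj
      rcases lt_or_eq_of_le hkj with h | h
      · exact hnx (lt_trans hxk (hanti j k h (Finset.mem_range.mp hkN)))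
      · exact hnx (h ▸ hxk)
    have := Finset.card_le_card hsub
    rw [hcard, card_range] at this
    omega
  · intro j hmj hjN
    by_contra hjx
    push_neg at hjx
    have hxj : x < w j := lt_of_le_of_ne hjx (Ne.symm (hne j hjN))
    have hsub : range (j+1) ⊆ (range N).filter (fun j => x < w j) := by
      intro k hk
      have hkj : k ≤ j := by simpa [Nat.lt_succ_iff] using hk
      rw [Finset.mem_filter, Finset.mem_range]
      refine ⟨by omega, ?_⟩
      rcases lt_or_eq_of_le hkj with h | h
      · exact lt_trans hxj (hanti k j h hjN)
      · exact h ▸ hxj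
    have := Finset.card_le_card hsub
    rw [hcard, card_range] at this
    omega

lemma squeeze_M (K : ℕ) (M : ℕ → ℕ) (hmono : ∀ i, i < K → M i ≤ M (i+1))
    (hpar : ∀ i, i ≤ K → M i % 2 = i % 2) (htop : M K ≤ K + 1) : ∀ i, i ≤ K → M i = i := by
  have hlow : ∀ i, i ≤ K → i ≤ M i := by
    intro i
    induction i with
    | zero => intro; exact Nat.zero_le _
    | succ j ih =>
      intro hj
      have h1 := ih (by omega)
      have h2 := hmono j (by omega)
      have h3 := hpar j (by omega)
      have h4 := hpar (j+1) hj
      omega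
  have htopK : M K = K := by
    have := hpar K le_rfl
    have := hlow K le_rfl
    omega
  have hup : ∀ d, d ≤ K → M (K - d) ≤ K - d := by
    intro d
    induction d with
    | zero =>
      intro
      simpa using le_of_eq htopK
    | succ e ih =>
      intro he
      have h1 := ih (by omega)
      have h2 := hmono (K - (e+1)) (by omega)
      have h3 : K - (e+1) + 1 = K - e := by omega
      rw [h3] at h2
      have h4 := hpar (K - (e+1)) (by omega)
      have h5 := hpar (K - e) (by omega)
      omega
  intro i hi
  have := hup (K - i) (by omega)
  have h6 : K - (K - i) = i := by omega
  rw [h6] at this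
  have := hlow i hi
  omega

lemma anti_of_consec (N : ℕ) (v : ℕ → ℝ) (h : ∀ i, i+1 < N → v (i+1) < v i) :
    ∀ i j, i < j → j < N → v j < v i := by
  intro i j hij hjN
  induction j with
  | zero => omega
  | succ k ih =>
    rcases Nat.lt_or_ge i k with h2 | h2
    · exact lt_trans (h k hjN) (ih h2 (by omega))
    · have : i = k := by omega
      exact this ▸ h k hjN

lemma ivt_sign (p : ℝ[X]) (a b : ℝ) (hab : a < b) (m : ℕ)
    (ha : 0 < (-1:ℝ)^(m+1) * p.eval a) (hb : 0 < (-1:ℝ)^m * p.eval b) :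
    ∃ c, a < c ∧ c < b ∧ p.eval c = 0 := by
  have hcont : ContinuousOn (fun x => p.eval x) (Set.Icc a b) := p.continuousOn
  rcases Nat.even_or_odd m with hm | hm
  · have h1 : p.eval a < 0 := by
      have : (-1:ℝ)^(m+1) = -1 := by rw [pow_succ, Even.neg_one_pow hm]; ring
      rw [this] at ha; linarith
    have h2 : 0 < p.eval b := by rw [Even.neg_one_pow hm] at hb; linarith
    have := intermediate_value_Ioo (le_of_lt hab) hcont
    have h0 : (0:ℝ) ∈ Set.Ioo (p.eval a) (p.eval b) := ⟨h1, h2⟩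
    rcases this h0 with ⟨c, hc, hc0⟩
    exact ⟨c, hc.1, hc.2, hc0⟩
  · have h1 : 0 < p.eval a := by
      have : (-1:ℝ)^(m+1) = 1 := by
        rcases hm with ⟨k, hk⟩
        subst hk
        have : 2*k+1+1 = 2*(k+1) := by ring
        rw [this, pow_mul]; norm_num
      rw [this] at ha; linarith
    have h2 : p.eval b < 0 := by rw [Odd.neg_one_pow hm] at hb; linarith
    have := intermediate_value_Ioo' (le_of_lt hab) hcont
    have h0 : (0:ℝ) ∈ Set.Ioo (p.eval b) (p.eval a) := ⟨h2, h1⟩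
    rcases this h0 with ⟨c, hc, hc0⟩
    exact ⟨c, hc.1, hc.2, hc0⟩

lemma deriv_eval_root (N : ℕ) (v : ℕ → ℝ) (i : ℕ) (hi : i < N) :
    (derivative (∏ j ∈ range N, (X - C (v j)))).eval (v i)
      = ∏ j ∈ (range N).erase i, (v i - v j) := by
  rw [← Finset.mul_prod_erase (range N) _ (Finset.mem_range.mpr hi)]
  rw [derivative_mul, derivative_sub, derivative_X, derivative_C, sub_zero, one_mul]
  rw [eval_add, eval_mul, eval_sub, eval_X, eval_C, sub_self, zero_mul, add_zero, eval_prod]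
  simp

/-- sign of the derivative of a factored polynomial at its own i-th root -/
lemma sign_deriv_at_root (N : ℕ) (v : ℕ → ℝ) (i : ℕ) (hi : i < N)
    (hanti : ∀ a b, a < b → b < N → v b < v a) :
    0 < (-1:ℝ)^i * (derivative (∏ j ∈ range N, (X - C (v j)))).eval (v i) := by
  rw [deriv_eval_root N v i hi]
  have hne : ∀ j ∈ (range N).erase i, v j ≠ v i := by
    intro j hj
    rcases Finset.mem_erase.mp hj with ⟨hji, hjN⟩
    rcases Nat.lt_or_ge j i with h | h
    · exact ne_of_gt (hanti j i h hi)
    · exact ne_of_lt (hanti i j (by omega) (Finset.mem_range.mp hjN))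
  have := sign_prod_gen ((range N).erase i) v (v i) hne
  have hcard : (((range N).erase i).filter (fun j => v i < v j)).card = i := by
    have hfe : ((range N).erase i).filter (fun j => v i < v j) = range i := by
      ext j
      simp only [Finset.mem_filter, Finset.mem_erase, Finset.mem_range]
      constructor
      · rintro ⟨⟨hji, hjN⟩, hvv⟩
        by_contra hj
        push_neg at hj
        have : i < j := by omega
        exact absurd hvv (not_lt.mpr (le_of_lt (hanti i j this hjN)))
      · intro hj
        exact ⟨⟨by omega, by omega⟩, hanti j i hj hi⟩
    rw [hfe, card_range]
  rw [hcard] at this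
  exact this

/-- far to the left, (-1)^m * Pp m s is positive -/
lemma exists_low (m : ℕ) (hm : 1 ≤ m) (s : ℝ) (hs : 0 ≤ s) (c : ℝ) :
    ∃ L, L < c ∧ 0 < (-1:ℝ)^m * (Pp m s).eval L := by
  set a : ℕ → ℝ := fun k => (m.choose k : ℝ) * ((k:ℝ) + s)^(m-k) with ha
  have hak : ∀ k, 0 ≤ a k := by
    intro k
    apply mul_nonneg (Nat.cast_nonneg _)
    apply pow_nonneg
    positivity
  set Ms : ℝ := ∑ k ∈ range m, a k with hMs
  have hMs0 : 0 ≤ Ms := Finset.sum_nonneg (fun k _ => hak k)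
  set y : ℝ := max (Ms + 1) (1 - c) with hy
  have hy1 : 1 ≤ y := le_trans (by linarith) (le_max_left _ _)
  have hyM : Ms + 1 ≤ y := le_max_left _ _
  have hyc : -y < c := by
    have := le_max_right (Ms + 1) (1 - c)
    have hyy : 1 - c ≤ y := this
    linarith
  refine ⟨-y, hyc, ?_⟩
  have hkey : (-1:ℝ)^m * (Pp m s).eval (-y)
      = (-1:ℝ)^m * (a m * (-y)^m) + ∑ k ∈ range m, (-1:ℝ)^m * (a k * (-y)^k) := by
    rw [eval_Pp, Finset.sum_range_succ, mul_add, Finset.mul_sum]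
    ring
  have hlast : (-1:ℝ)^m * (a m * (-y)^m) = y^m := by
    have ham : a m = 1 := by simp [ha]
    rw [ham, one_mul, ← mul_pow, neg_one_mul, neg_neg]
  have hbound : ∀ k ∈ range m, -(a k * y^(m-1)) ≤ (-1:ℝ)^m * (a k * (-y)^k) := by
    intro k hk
    have hkm : k ≤ m - 1 := by
      have := Finset.mem_range.mp hk; omega
    have habs : |(-1:ℝ)^m * (a k * (-y)^k)| = a k * y^k := by
      rw [abs_mul, abs_mul, abs_pow, abs_pow, abs_neg, abs_neg, abs_one, one_pow, one_mul,
        abs_of_nonneg (hak k), abs_of_nonneg (by linarith : (0:ℝ) ≤ y)]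
    have h1 : -(a k * y^k) ≤ (-1:ℝ)^m * (a k * (-y)^k) := by
      rw [← habs]; exact neg_abs_le _
    have h2 : a k * y^k ≤ a k * y^(m-1) := by
      apply mul_le_mul_of_nonneg_left _ (hak k)
      exact pow_le_pow_right₀ hy1 hkm
    linarith
  have hsum : -(Ms * y^(m-1)) ≤ ∑ k ∈ range m, (-1:ℝ)^m * (a k * (-y)^k) := by
    have h0 := Finset.sum_le_sum hbound
    have heq : ∑ i ∈ range m, -(a i * y ^ (m - 1)) = -(Ms * y^(m-1)) := by
      rw [hMs, Finset.sum_mul, ← Finset.sum_neg_distrib]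
    rw [heq] at h0
    exact h0
  have hyp : 0 < y^(m-1) := pow_pos (by linarith) _
  have hfin : Ms * y^(m-1) + y^(m-1) ≤ y^m := by
    have h3 : (Ms + 1) * y^(m-1) ≤ y * y^(m-1) := by
      apply mul_le_mul_of_nonneg_right hyM (le_of_lt hyp)
    have h4 : y * y^(m-1) = y^m := by
      rw [← pow_succ']
      congr 1
      omega
    linarith
  rw [hkey, hlast]
  linarith

/-- `v` lists the `m` distinct roots of `Pp m s` in strictly decreasing order -/
def RV (m : ℕ) (s : ℝ) (v : ℕ → ℝ) : Prop :=
  (∀ i j, i < j → j < m → v j < v i) ∧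
  (∀ i, i < m → (Pp m s).eval (v i) = 0) ∧
  (∀ i, i < m → v i ≤ 0) ∧
  (0 < s → ∀ i, i < m → v i < 0)

def Fam (m : ℕ) (F : ℝ → ℕ → ℝ) : Prop :=
  ∀ s, 0 ≤ s → RV m s (F s) ∧
    ∀ t, 0 < t → t ≤ 1 →
      (∀ i, i < m → F (s+t) i < F s i) ∧
      (∀ i, i+1 < m → F s (i+1) < F (s+t) i)

def Link (n : ℕ) (A B : ℝ → ℕ → ℝ) : Prop :=
  ∀ s, 0 ≤ s →
    (∀ i, i+1 < n+1 → B s (i+1) < A s i) ∧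
    (0 < s → ∀ i, i < n → A s i < B s i)

lemma RV_factor {m : ℕ} {s : ℝ} {v : ℕ → ℝ} (h : RV m s v) :
    Pp m s = ∏ i ∈ range m, (X - C (v i)) :=
  factor_of_roots _ m (monic_Pp m s) (natDegree_Pp m s) v h.1 h.2.1

/-- main construction: roots of `Pp (n+2) s` located w.r.t. roots of `Pp (n+1) s` and
    `Pp (n+1) (s+1)` -/
lemma step_exists (n : ℕ) (A B : ℝ → ℕ → ℝ) (hA : Fam n A) (hB : Fam (n+1) B)
    (hL : Link n A B) (s : ℝ) (hs : 0 ≤ s) :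
    ∃ c : ℕ → ℝ,
      (∀ i, i < n+2 → (Pp (n+2) s).eval (c i) = 0) ∧
      (∀ i, i < n+1 → c (i+1) < B (s+1) i) ∧
      (∀ i, i+1 < n+1 → B s (i+1) < c (i+1)) ∧
      (B s 0 ≤ c 0) ∧ (c 0 ≤ 0) ∧ (0 < s → B s 0 < c 0 ∧ c 0 < 0) := by
  have hs1 : (0:ℝ) ≤ s + 1 := by linarith
  obtain ⟨hRVβ, hRowβ⟩ := hB s hs
  obtain ⟨hRVb, -⟩ := hB (s+1) hs1
  obtain ⟨hRVa, -⟩ := hA (s+1) hs1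
  obtain ⟨hββ, hβb⟩ := hRowβ 1 one_pos le_rfl
  obtain ⟨hL1, hL2⟩ := hL (s+1) hs1
  have hL2' := hL2 (by linarith)
  have Fβ : Pp (n+1) s = ∏ i ∈ range (n+1), (X - C (B s i)) := RV_factor hRVβ
  have Fb : Pp (n+1) (s+1) = ∏ i ∈ range (n+1), (X - C (B (s+1) i)) := RV_factor hRVb
  have Fa : Pp n (s+1) = ∏ i ∈ range n, (X - C (A (s+1) i)) := RV_factor hRVa
  have hbneg : ∀ i, i < n+1 → B (s+1) i < 0 := fun i hi => hRVb.2.2.2 (by linarith) i hi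
  have hβle : ∀ i, i < n+1 → B s i ≤ 0 := hRVβ.2.2.1
  have hrec : Pp (n+2) s
      = C s * Pp (n+1) s + X * Pp (n+1) (s+1) + X * derivative (Pp (n+1) s) := Pp_rec (n+1) s
  have heval : ∀ x : ℝ, (Pp (n+2) s).eval x
      = s * (Pp (n+1) s).eval x + x * (Pp (n+1) (s+1)).eval x
        + x * (derivative (Pp (n+1) s)).eval x := by
    intro x
    rw [hrec]
    simp only [eval_add, eval_mul, eval_C, eval_X]
  -- sign of Pp (n+2) s at the roots of Pp (n+1) s
  have hsβ : ∀ i, i < n+1 → B s i < 0 → 0 < (-1:ℝ)^(i+1) * (Pp (n+2) s).eval (B s i) := by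
    intro i hi hneg
    have hT1 : 0 < (-1:ℝ)^i * (Pp (n+1) (s+1)).eval (B s i) := by
      rw [Fb]
      apply sign_eval_factored (n+1) (B (s+1)) (B s i) i (by omega)
      · intro j hj
        have hi1 : 1 ≤ i := by omega
        have e : i - 1 + 1 = i := by omega
        have key : B s i < B (s+1) (i-1) := by
          have h0 := hβb (i-1) (by omega)
          rwa [e] at h0
        rcases lt_or_eq_of_le (show j ≤ i - 1 by omega) with h | h
        · exact lt_trans key (hRVb.1 j (i-1) h (by omega))
        · exact h ▸ key
      · intro j hj1 hj2
        rcases lt_or_eq_of_le hj1 with h | h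
        · exact lt_trans (hRVb.1 i j h hj2) (hββ i hi)
        · exact h ▸ (hββ i hi)
    have hT2 : 0 < (-1:ℝ)^i * (derivative (Pp (n+1) s)).eval (B s i) := by
      rw [Fβ]
      exact sign_deriv_at_root (n+1) (B s) i hi hRVβ.1
    have h0 := heval (B s i)
    rw [hRVβ.2.1 i hi, mul_zero, zero_add] at h0
    rw [h0]
    have hexp : (-1:ℝ)^(i+1) * (B s i * (Pp (n+1) (s+1)).eval (B s i)
          + B s i * (derivative (Pp (n+1) s)).eval (B s i))
        = (-(B s i)) * ((-1:ℝ)^i * (Pp (n+1) (s+1)).eval (B s i))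
          + (-(B s i)) * ((-1:ℝ)^i * (derivative (Pp (n+1) s)).eval (B s i)) := by
      rw [pow_succ]; ring
    rw [hexp]
    have hpos : (0:ℝ) < -(B s i) := by linarith
    have := mul_pos hpos hT1
    have := mul_pos hpos hT2
    linarith
  -- sign of Pp (n+2) s at the roots of Pp (n+1) (s+1)
  have hsb : ∀ j, j < n+1 → 0 < (-1:ℝ)^(j+1) * (Pp (n+2) s).eval (B (s+1) j) := by
    intro j hj
    have hU1 : 0 < (-1:ℝ)^(j+1) * (Pp (n+1) s).eval (B (s+1) j) := by
      rw [Fβ]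
      apply sign_eval_factored (n+1) (B s) (B (s+1) j) (j+1) (by omega)
      · intro k hk
        have key : B (s+1) j < B s j := hββ j hj
        rcases lt_or_eq_of_le (show k ≤ j by omega) with h | h
        · exact lt_trans key (hRVβ.1 k j h hj)
        · exact h ▸ key
      · intro k hk1 hk2
        have hj1 : j + 1 < n+1 := by omega
        have key : B s (j+1) < B (s+1) j := hβb j hj1
        rcases lt_or_eq_of_le hk1 with h | h
        · exact lt_trans (hRVβ.1 (j+1) k h hk2) key
        · exact h ▸ key
    have hU2 : 0 < (-1:ℝ)^j * (derivative (Pp (n+1) s)).eval (B (s+1) j) := by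
      rw [derivative_Pp n s, eval_mul, eval_C]
      have h2 : 0 < (-1:ℝ)^j * (Pp n (s+1)).eval (B (s+1) j) := by
        rw [Fa]
        apply sign_eval_factored n (A (s+1)) (B (s+1) j) j (by omega)
        · intro k hk
          have hj1 : 1 ≤ j := by omega
          have e : j - 1 + 1 = j := by omega
          have key : B (s+1) j < A (s+1) (j-1) := by
            have h0 := hL1 (j-1) (by omega)
            rwa [e] at h0
          rcases lt_or_eq_of_le (show k ≤ j - 1 by omega) with h | h
          · exact lt_trans key (hRVa.1 k (j-1) h (by omega))
          · exact h ▸ key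
        · intro k hk1 hk2
          have key : A (s+1) j < B (s+1) j := hL2' j (by omega)
          rcases lt_or_eq_of_le hk1 with h | h
          · exact lt_trans (hRVa.1 j k h hk2) key
          · exact h ▸ key
      have hn1 : (0:ℝ) < (n:ℝ)+1 := by positivity
      calc (0:ℝ) < ((n:ℝ)+1) * ((-1:ℝ)^j * (Pp n (s+1)).eval (B (s+1) j)) :=
            mul_pos hn1 h2
        _ = (-1:ℝ)^j * (((n:ℝ)+1) * (Pp n (s+1)).eval (B (s+1) j)) := by ring
    have h0 := heval (B (s+1) j)
    rw [hRVb.2.1 j hj, mul_zero, add_zero] at h0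
    rw [h0]
    have hexp : (-1:ℝ)^(j+1) * (s * (Pp (n+1) s).eval (B (s+1) j)
          + B (s+1) j * (derivative (Pp (n+1) s)).eval (B (s+1) j))
        = s * ((-1:ℝ)^(j+1) * (Pp (n+1) s).eval (B (s+1) j))
          + (-(B (s+1) j)) * ((-1:ℝ)^j * (derivative (Pp (n+1) s)).eval (B (s+1) j)) := by
      rw [pow_succ]; ring
    rw [hexp]
    have hpos : (0:ℝ) < -(B (s+1) j) := by
      have := hbneg j hj; linarith
    have h3 := mul_pos hpos hU2
    have h4 : 0 ≤ s * ((-1:ℝ)^(j+1) * (Pp (n+1) s).eval (B (s+1) j)) :=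
      mul_nonneg hs (le_of_lt hU1)
    linarith
  -- middle roots
  have hmid : ∀ i, ∃ x, i < n →
      (B s (i+1) < x ∧ x < B (s+1) i ∧ (Pp (n+2) s).eval x = 0) := by
    intro i
    by_cases hi : i < n
    · have hab : B s (i+1) < B (s+1) i := hβb i (by omega)
      have ha : 0 < (-1:ℝ)^(i+1+1) * (Pp (n+2) s).eval (B s (i+1)) := by
        apply hsβ (i+1) (by omega)
        calc B s (i+1) < B s 0 := hRVβ.1 0 (i+1) (by omega) (by omega)
          _ ≤ 0 := hβle 0 (by omega)
      have hb' : 0 < (-1:ℝ)^(i+1) * (Pp (n+2) s).eval (B (s+1) i) := hsb i (by omega)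
      obtain ⟨x, hx1, hx2, hx3⟩ := ivt_sign (Pp (n+2) s) _ _ hab (i+1) ha hb'
      exact ⟨x, fun _ => ⟨hx1, hx2, hx3⟩⟩
    · exact ⟨0, fun h => absurd h hi⟩
  choose cm hcm using hmid
  -- bottom root
  have hbot : ∃ x, x < B (s+1) n ∧ (Pp (n+2) s).eval x = 0 := by
    obtain ⟨L, hL0, hLpos⟩ := exists_low (n+2) (by omega) s hs (B (s+1) n)
    have hb' : 0 < (-1:ℝ)^(n+1) * (Pp (n+2) s).eval (B (s+1) n) := hsb n (by omega)
    obtain ⟨x, hx1, hx2, hx3⟩ := ivt_sign (Pp (n+2) s) L (B (s+1) n) hL0 (n+1)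
      (by rw [show n+1+1 = n+2 from rfl]; exact hLpos) hb'
    exact ⟨x, hx2, hx3⟩
  obtain ⟨cb, hcb1, hcb2⟩ := hbot
  -- top root
  have htop : ∃ x, B s 0 ≤ x ∧ x ≤ 0 ∧ (Pp (n+2) s).eval x = 0 ∧
      (0 < s → B s 0 < x ∧ x < 0) := by
    rcases lt_or_eq_of_le hs with hspos | hseq
    · have hβ0 : B s 0 < 0 := hRVβ.2.2.2 hspos 0 (by omega)
      have ha : 0 < (-1:ℝ)^(0+1) * (Pp (n+2) s).eval (B s 0) := hsβ 0 (by omega) hβ0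
      have hb' : 0 < (-1:ℝ)^0 * (Pp (n+2) s).eval 0 := by
        rw [eval_Pp_zero, pow_zero, one_mul]
        positivity
      obtain ⟨x, hx1, hx2, hx3⟩ := ivt_sign (Pp (n+2) s) _ _ hβ0 0 ha hb'
      exact ⟨x, le_of_lt hx1, le_of_lt hx2, hx3, fun _ => ⟨hx1, hx2⟩⟩
    · refine ⟨0, ?_, le_rfl, ?_, ?_⟩
      · exact hβle 0 (by omega)
      · rw [eval_Pp_zero, ← hseq]
        simp
      · intro h; exact absurd hseq (by linarith)
  obtain ⟨ct, hct1, hct2, hct3, hct4⟩ := htop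
  -- assemble
  refine ⟨fun j => if j = 0 then ct else if j < n+1 then cm (j-1) else cb, ?_, ?_, ?_, ?_, ?_, ?_⟩
  · intro i hi
    by_cases h0 : i = 0
    · simp only [h0, if_pos rfl]; exact hct3
    · by_cases h1 : i < n+1
      · simp only [if_neg h0, if_pos h1]
        have := (hcm (i-1) (by omega)).2.2
        exact this
      · simp only [if_neg h0, if_neg h1]
        exact hcb2
  · intro i hi
    by_cases h1 : i+1 < n+1
    · simp only [Nat.succ_ne_zero, if_neg, if_pos h1]
      have h2 := (hcm i (by omega))
      have e : i + 1 - 1 = i := by omega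
      rw [e]
      exact h2.2.1
    · have hieq : i = n := by omega
      subst hieq
      simp only [Nat.succ_ne_zero, if_neg, if_neg h1]
      exact hcb1
  · intro i hi
    simp only [Nat.succ_ne_zero, if_neg, if_pos hi]
    have e : i + 1 - 1 = i := by omega
    rw [e]
    exact (hcm i (by omega)).1
  · simp only [if_pos rfl]; exact hct1
  · simp only [if_pos rfl]; exact hct2
  · intro hsp
    simp only [if_pos rfl]
    exact hct4 hsp

lemma step (n : ℕ) (A B : ℝ → ℕ → ℝ) (hA : Fam n A) (hB : Fam (n+1) B) (hL : Link n A B) :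
    ∃ Cc : ℝ → ℕ → ℝ, Fam (n+2) Cc ∧ Link (n+1) B Cc := by
  have hex : ∀ s : ℝ, ∃ c : ℕ → ℝ, 0 ≤ s →
      ((∀ i, i < n+2 → (Pp (n+2) s).eval (c i) = 0) ∧
      (∀ i, i < n+1 → c (i+1) < B (s+1) i) ∧
      (∀ i, i+1 < n+1 → B s (i+1) < c (i+1)) ∧
      (B s 0 ≤ c 0) ∧ (c 0 ≤ 0) ∧ (0 < s → B s 0 < c 0 ∧ c 0 < 0)) := by
    intro s
    by_cases hs : 0 ≤ s
    · obtain ⟨c, hc⟩ := step_exists n A B hA hB hL s hs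
      exact ⟨c, fun _ => hc⟩
    · exact ⟨fun _ => 0, fun h => absurd h hs⟩
  choose Cc hCc using hex
  -- shorthand for the spec
  have SP1 : ∀ s, 0 ≤ s → ∀ i, i < n+2 → (Pp (n+2) s).eval (Cc s i) = 0 :=
    fun s hs => (hCc s hs).1
  have SP2 : ∀ s, 0 ≤ s → ∀ i, i < n+1 → Cc s (i+1) < B (s+1) i :=
    fun s hs => (hCc s hs).2.1
  have SP3 : ∀ s, 0 ≤ s → ∀ i, i+1 < n+1 → B s (i+1) < Cc s (i+1) :=
    fun s hs => (hCc s hs).2.2.1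
  have SP4 : ∀ s, 0 ≤ s → B s 0 ≤ Cc s 0 := fun s hs => (hCc s hs).2.2.2.1
  have SP5 : ∀ s, 0 ≤ s → Cc s 0 ≤ 0 := fun s hs => (hCc s hs).2.2.2.2.1
  have SP6 : ∀ s, 0 ≤ s → 0 < s → B s 0 < Cc s 0 ∧ Cc s 0 < 0 :=
    fun s hs => (hCc s hs).2.2.2.2.2
  -- lower bound on roots: B s i ≤ Cc s i always
  have SPge : ∀ s, 0 ≤ s → ∀ i, i < n+1 → B s i ≤ Cc s i := by
    intro s hs i hi
    rcases Nat.eq_zero_or_pos i with h0 | h0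
    · exact h0 ▸ SP4 s hs
    · have e : i - 1 + 1 = i := by omega
      have := SP3 s hs (i-1) (by omega)
      rw [e] at this
      exact le_of_lt this
  -- antitone of the new root vector
  have hanti : ∀ s, 0 ≤ s → ∀ i j, i < j → j < n+2 → Cc s j < Cc s i := by
    intro s hs
    apply anti_of_consec
    intro i hi
    have hs1 : (0:ℝ) ≤ s+1 := by linarith
    have hββ := ((hB s hs).2 1 one_pos le_rfl).1
    calc Cc s (i+1) < B (s+1) i := SP2 s hs i (by omega)
      _ < B s i := hββ i (by omega)
      _ ≤ Cc s i := SPge s hs i (by omega)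
  -- RV for the new family
  have hRVC : ∀ s, 0 ≤ s → RV (n+2) s (Cc s) := by
    intro s hs
    refine ⟨hanti s hs, SP1 s hs, ?_, ?_⟩
    · intro i hi
      rcases Nat.eq_zero_or_pos i with h0 | h0
      · exact h0 ▸ SP5 s hs
      · exact le_of_lt (lt_of_lt_of_le (hanti s hs 0 i h0 hi) (SP5 s hs))
    · intro hsp i hi
      rcases Nat.eq_zero_or_pos i with h0 | h0
      · exact h0 ▸ (SP6 s hs hsp).2
      · exact lt_trans (hanti s hs 0 i h0 hi) (SP6 s hs hsp).2
  -- the key sign fact for row interlacing, via the mean value theorem in s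
  have hsgn : ∀ s, 0 ≤ s → ∀ t, 0 < t → t ≤ 1 → ∀ i, i < n+2 →
      0 < (-1:ℝ)^i * (Pp (n+2) (s+t)).eval (Cc s i) := by
    intro s hs t ht ht1 i hi
    set x := Cc s i with hx
    -- MVT
    have hst : s < s + t := by linarith
    have hcont : ContinuousOn (fun u => (Pp (n+2) u).eval x) (Set.Icc s (s+t)) := by
      intro u _
      exact (hasDerivAt_eval_Pp (n+1) x u).continuousAt.continuousWithinAt
    have hderiv : ∀ u ∈ Set.Ioo s (s+t),
        HasDerivAt (fun u => (Pp (n+2) u).eval x)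
          ((((n+1:ℕ):ℝ)+1) * (Pp (n+1) u).eval x) u :=
      fun u _ => hasDerivAt_eval_Pp (n+1) x u
    obtain ⟨ξ, hξ, hslope⟩ := exists_hasDerivAt_eq_slope
      (fun u => (Pp (n+2) u).eval x) _ hst hcont hderiv
    have hξ0 : (0:ℝ) ≤ ξ := le_trans hs (le_of_lt hξ.1)
    have hfs : (Pp (n+2) s).eval x = 0 := SP1 s hs i hi
    have hval : (Pp (n+2) (s+t)).eval x
        = t * ((((n+1:ℕ):ℝ)+1) * (Pp (n+1) ξ).eval x) := by
      rw [hslope, hfs, sub_zero]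
      field_simp
      rw [add_sub_cancel_left, mul_div_cancel_left₀ _ ht.ne']
    -- sign of the integrand
    obtain ⟨hRVBξ, -⟩ := hB ξ hξ0
    have FBξ : Pp (n+1) ξ = ∏ j ∈ range (n+1), (X - C (B ξ j)) := RV_factor hRVBξ
    have hsint : 0 < (-1:ℝ)^i * (Pp (n+1) ξ).eval x := by
      rw [FBξ]
      apply sign_eval_factored (n+1) (B ξ) x i (by omega)
      · intro j hj
        have hi1 : 1 ≤ i := by omega
        have e : i - 1 + 1 = i := by omega
        have key1 : x < B (s+1) (i-1) := by
          have h0 := SP2 s hs (i-1) (by omega)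
          rw [e] at h0
          exact h0
        have hd1 : 0 < s + 1 - ξ := by
          have : ξ < s + t := hξ.2
          linarith
        have hd2 : s + 1 - ξ ≤ 1 := by
          have : s ≤ ξ := le_of_lt hξ.1
          linarith
        have key2 : B (s+1) (i-1) < B ξ (i-1) := by
          have h0 := ((hB ξ hξ0).2 (s+1-ξ) hd1 hd2).1 (i-1) (by omega)
          have e2 : ξ + (s + 1 - ξ) = s + 1 := by ring
          rw [e2] at h0
          exact h0
        have key : x < B ξ (i-1) := lt_trans key1 key2
        rcases lt_or_eq_of_le (show j ≤ i - 1 by omega) with h | h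
        · exact lt_trans key (hRVBξ.1 j (i-1) h (by omega))
        · exact h ▸ key
      · intro j hj1 hj2
        have hin1 : i < n+1 := by omega
        have key1 : B ξ i < B s i := by
          have hd1 : 0 < ξ - s := by linarith [hξ.1]
          have hd2 : ξ - s ≤ 1 := by
            have : ξ < s + t := hξ.2
            linarith
          have h0 := ((hB s hs).2 (ξ-s) hd1 hd2).1 i hin1
          have e2 : s + (ξ - s) = ξ := by ring
          rw [e2] at h0
          exact h0
        have key : B ξ i < x := lt_of_lt_of_le key1 (SPge s hs i hin1)
        rcases lt_or_eq_of_le hj1 with h | h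
        · exact lt_trans (hRVBξ.1 i j h hj2) key
        · exact h ▸ key
    rw [hval]
    have hpos : (0:ℝ) < t * ((((n+1:ℕ):ℝ)+1)) := by positivity
    calc (0:ℝ) < (t * ((((n+1:ℕ):ℝ)+1))) * ((-1:ℝ)^i * (Pp (n+1) ξ).eval x) :=
          mul_pos hpos hsint
      _ = (-1:ℝ)^i * (t * ((((n+1:ℕ):ℝ)+1) * (Pp (n+1) ξ).eval x)) := by ring
  -- row interlacing for the new family
  have hRow : ∀ s, 0 ≤ s → ∀ t, 0 < t → t ≤ 1 →
      (∀ i, i < n+2 → Cc (s+t) i < Cc s i) ∧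
      (∀ i, i+1 < n+2 → Cc s (i+1) < Cc (s+t) i) := by
    intro s hs t ht ht1
    have hst0 : (0:ℝ) ≤ s + t := by linarith
    have Fw : Pp (n+2) (s+t) = ∏ j ∈ range (n+2), (X - C (Cc (s+t) j)) :=
      RV_factor (hRVC (s+t) hst0)
    have hne : ∀ i, i < n+2 → ∀ j, j < n+2 → Cc (s+t) j ≠ Cc s i := by
      intro i hi j hj heq
      have h1 := hsgn s hs t ht ht1 i hi
      have h2 : (Pp (n+2) (s+t)).eval (Cc s i) = 0 := heq ▸ SP1 (s+t) hst0 j hj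
      rw [h2, mul_zero] at h1
      exact lt_irrefl 0 h1
    -- the count function
    set Mi : ℕ → ℕ := fun i => ((range (n+2)).filter (fun j => Cc s i < Cc (s+t) j)).card
      with hMi
    have hpar : ∀ i, i ≤ n+1 → Mi i % 2 = i % 2 := by
      intro i hi
      have h1 := sign_prod_gen (range (n+2)) (Cc (s+t)) (Cc s i)
        (fun j hj => hne i (by omega) j (Finset.mem_range.mp hj))
      have h2 := hsgn s hs t ht ht1 i (by omega)
      rw [Fw, eval_prod] at h2
      have h3 : (∏ j ∈ range (n+2), (X - C (Cc (s+t) j)).eval (Cc s i))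
          = ∏ j ∈ range (n+2), (Cc s i - Cc (s+t) j) := by
        apply Finset.prod_congr rfl
        intro j _
        simp
      rw [h3] at h2
      exact pow_neg_one_parity _ _ _ h1 h2
    have hmono : ∀ i, i < n+1 → Mi i ≤ Mi (i+1) := by
      intro i hi
      apply Finset.card_le_card
      intro j hj
      rcases Finset.mem_filter.mp hj with ⟨hjr, hlt⟩
      refine Finset.mem_filter.mpr ⟨hjr, ?_⟩
      exact lt_trans (hanti s hs i (i+1) (by omega) (by omega)) hlt
    have htopM : Mi (n+1) ≤ (n+1) + 1 := by
      have h1 : ((range (n+2)).filter (fun j => Cc s (n+1) < Cc (s+t) j)).card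
          ≤ (range (n+2)).card := Finset.card_le_card (Finset.filter_subset _ _)
      rw [card_range] at h1
      exact h1
    have hMeq := squeeze_M (n+1) Mi hmono hpar htopM
    have hinit : ∀ i, i < n+2 →
        (∀ j, j < i → Cc s i < Cc (s+t) j) ∧
        (∀ j, i ≤ j → j < n+2 → Cc (s+t) j < Cc s i) := by
      intro i hi
      exact filter_initial (n+2) (Cc (s+t)) (hRVC (s+t) hst0).1 (Cc s i)
        (fun j hj => hne i hi j hj) i (hMeq i (by omega))
    constructor
    · intro i hi
      exact (hinit i hi).2 i le_rfl hi
    · intro i hi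
      exact (hinit (i+1) hi).1 i (by omega)
  refine ⟨Cc, ?_, ?_⟩
  · intro s hs
    exact ⟨hRVC s hs, fun t ht ht1 => hRow s hs t ht ht1⟩
  · intro s hs
    constructor
    · intro i hi
      have hs1 : (0:ℝ) ≤ s+1 := by linarith
      have hββ := ((hB s hs).2 1 one_pos le_rfl).1
      calc Cc s (i+1) < B (s+1) i := SP2 s hs i (by omega)
        _ < B s i := hββ i (by omega)
    · intro hsp i hi
      rcases Nat.eq_zero_or_pos i with h0 | h0
      · exact h0 ▸ (SP6 s hs hsp).1
      · have e : i - 1 + 1 = i := by omega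
        have := SP3 s hs (i-1) (by omega)
        rw [e] at this
        exact this

lemma levels : ∀ n : ℕ, ∃ A B : ℝ → ℕ → ℝ, Fam n A ∧ Fam (n+1) B ∧ Link n A B := by
  intro n
  induction n with
  | zero =>
    refine ⟨fun _ _ => 0, fun s _ => -s, ?_, ?_, ?_⟩
    · intro s hs
      refine ⟨⟨?_, ?_, ?_, ?_⟩, ?_⟩
      · intro i j _ hj; omega
      · intro i hi; omega
      · intro i hi; omega
      · intro _ i hi; omega
      · intro t _ _
        exact ⟨fun i hi => by omega, fun i hi => by omega⟩
    · intro s hs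
      refine ⟨⟨?_, ?_, ?_, ?_⟩, ?_⟩
      · intro i j hij hj; omega
      · intro i hi
        rw [eval_Pp]
        rw [Finset.sum_range_succ, Finset.sum_range_succ, Finset.sum_range_zero]
        norm_num
      · intro i hi; simp only []; linarith
      · intro hsp i hi; simp only []; linarith
      · intro t ht _
        constructor
        · intro i hi; simp only []; linarith
        · intro i hi; omega
    · intro s hs
      exact ⟨fun i hi => by omega, fun _ i hi => by omega⟩
  | succ m ih =>
    obtain ⟨A, B, hA, hB, hL⟩ := ih
    obtain ⟨Cc, hC, hLC⟩ := step m A B hA hB hL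
    exact ⟨B, Cc, hB, hC, hLC⟩

end

/-- A real polynomial is real-rooted if it is constant or all of its complex
roots are real. -/
def RealRooted (p : Polynomial ℝ) : Prop :=
  p.natDegree = 0 ∨ ∀ z : ℂ, Polynomial.aeval z p = 0 → z.im = 0

/-- For every `n ≥ 0`, the idempotent polynomial
`∑_{k=0}^n C(n,k) k^{n-k} x^k` is real-rooted (with `0^0 = 1`). -/
theorem realRooted_idempotent (n : ℕ) :
    RealRooted (∑ k ∈ Finset.range (n + 1),
      Polynomial.C ((n.choose k : ℝ) * (k : ℝ) ^ (n - k)) * Polynomial.X ^ k) := by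
  have hPp : (∑ k ∈ Finset.range (n + 1),
      Polynomial.C ((n.choose k : ℝ) * (k : ℝ) ^ (n - k)) * Polynomial.X ^ k) = Pp n 0 := by
    unfold Pp mkp
    apply Finset.sum_congr rfl
    intro k _
    norm_num
  rw [hPp]
  cases n with
  | zero =>
    left
    have : Pp 0 0 = Polynomial.C 1 := by
      unfold Pp mkp
      simp
    rw [this]
    exact natDegree_C 1
  | succ m =>
    right
    intro z hz
    obtain ⟨A, B, hA, hB, hL⟩ := levels m
    obtain ⟨hRVB, -⟩ := hB 0 le_rfl
    have hfac : Pp (m+1) 0 = ∏ i ∈ range (m+1), (X - C (B 0 i)) := RV_factor hRVB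
    rw [hfac] at hz
    rw [map_prod] at hz
    obtain ⟨i, hi, hzero⟩ := Finset.prod_eq_zero_iff.mp hz
    have : (Polynomial.aeval z) (X - C (B 0 i)) = z - (B 0 i : ℂ) := by
      simp
    rw [this] at hzero
    have hz2 : z = ((B 0 i : ℝ) : ℂ) := by
      have := sub_eq_zero.mp hzero
      exact_mod_cast this
    rw [hz2]
    exact Complex.ofReal_im _
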